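/- arXiv:2001.01089 — 3 statements merged into one kernel-verified Lean document; each statement's English description precedes it below -/
import Mathlib

section
/- Every answer set of a ground disjunctive logic program Π is a minimal model of Π: if M and N are both answer sets of Π and N ⊆ M, then N = M. -/
structure Rule (A : Type) where
  head : Set A
  pbody : Set A
  nbody : Set A

def modelsRule {A : Type} (M : Set A) (r : Rule A) : Prop :=
  (r.pbody ⊆ M ∧ r.nbody ∩ M = ∅) → (r.head ∩ M).Nonempty

def modelsProg {A : Type} (M : Set A) (R : Set (Rule A)) : Prop :=
  ∀ r ∈ R, modelsRule M r

def glReduct {A : Type} (R : Set (Rule A)) (M : Set A) : Set (Rule A) :=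
  { r' | ∃ r ∈ R, r.nbody ∩ M = ∅ ∧ r' = ⟨r.head, r.pbody, ∅⟩ }

/-- `M` is an answer set: `M` models `Π` and no proper subset of `M`
models the GL-reduct `Π^M`. -/
def answerSet {A : Type} (R : Set (Rule A)) (M : Set A) : Prop :=
  modelsProg M R ∧ ¬ ∃ N, N ⊂ M ∧ modelsProg N (glReduct R M)

/-- answer sets are minimal models: if `M` and `N` are both answer
sets of `Π` and `N ⊆ M`, then `N = M`. -/
theorem answerSets_antichain
    (A : Type) (R : Set (Rule A)) (M N : Set A)
    (hM : answerSet R M) (hN : answerSet R N) (hNM : N ⊆ M) :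
    N = M := by
  by_contra hne
  apply hM.2
  refine ⟨N, ⟨hNM, fun h => hne (le_antisymm hNM h)⟩, ?_⟩
  rintro r' ⟨r, hrR, hnb, rfl⟩
  rintro ⟨hpb, -⟩
  apply hN.1 r hrR
  refine ⟨hpb, ?_⟩
  have : r.nbody ∩ N ⊆ r.nbody ∩ M := Set.inter_subset_inter_right _ hNM
  rw [hnb] at this
  exact Set.subset_eq_empty this rfl
end

section
/- The chain-based proper-subset gadget is correct: for Boolean vectors x, y ∈ {0,1}^n, the conjunction leq(y_i, x_i) for all i (where leq holds for pairs (0,0), (0,1), (1,1)) together with the existence of values N_0 = 0, N_n = 1, and or(N_{i-1}, x_i − y_i, N_i) for all i (where or(a,b,c) holds iff c = a ∨ b under the Boolean interpretation) is satisfiable if and only if the set {i : y_i = 1} is a proper subset of {i : x_i = 1}. -/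
private lemma chain_val (n : ℕ) (x y : Fin n → Bool) (N : Fin (n+1) → Bool)
    (h0 : N 0 = false)
    (hstep : ∀ i : Fin n, N i.succ = (N i.castSucc || (x i && !y i))) :
    ∀ k : Fin (n+1), N k = true ↔ ∃ i : Fin n, i.val < k.val ∧ (x i && !y i) = true := by
  intro k
  induction k using Fin.induction with
  | zero => simp [h0]
  | succ j ih =>
    rw [hstep j]
    simp only [Bool.or_eq_true, ih]
    constructor
    · rintro (⟨i, hi, hx⟩ | hx)
      · refine ⟨i, ?_, hx⟩
        simp only [Fin.coe_castSucc] at hi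
        simp only [Fin.val_succ]; omega
      · exact ⟨j, by simp [Fin.val_succ], hx⟩
    · rintro ⟨i, hi, hx⟩
      simp only [Fin.val_succ] at hi
      rcases lt_or_eq_of_le (Nat.lt_succ_iff.mp hi) with h | h
      · exact Or.inl ⟨i, by simp only [Fin.coe_castSucc]; omega, hx⟩
      · right; exact (Fin.ext h : i = j) ▸ hx

/-- correctness of the chain-based proper-subset gadget. For
Boolean vectors x, y ∈ {0,1}ⁿ (n ≥ 1): the conjunction of `y i ≤ x i` for all i
together with the existence of a chain N₀ = 0, Nₙ = 1 with
Nᵢ = N_{i-1} ∨ (xᵢ − yᵢ) is satisfiable iff {i : yᵢ = 1} ⊊ {i : xᵢ = 1}.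
(Booleans encode 0/1; given yᵢ ≤ xᵢ, the value xᵢ − yᵢ is `x i && !y i`.) -/
theorem chain_proper_subset_gadget
    (n : ℕ) (hn : 1 ≤ n) (x y : Fin n → Bool) :
    ((∀ i : Fin n, y i ≤ x i) ∧
      ∃ N : Fin (n + 1) → Bool,
        N 0 = false ∧ N (Fin.last n) = true ∧
        ∀ i : Fin n, N i.succ = (N i.castSucc || (x i && !y i))) ↔
    ({i : Fin n | y i = true} ⊂ {i : Fin n | x i = true}) := by
  rw [Set.ssubset_iff_subset_ne]
  constructor
  · rintro ⟨hle, N, h0, hlast, hstep⟩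
    have := (chain_val n x y N h0 hstep (Fin.last n)).mp hlast
    obtain ⟨i, -, hx⟩ := this
    simp only [Bool.and_eq_true, Bool.not_eq_true'] at hx
    constructor
    · intro j hj
      have := hle j
      simp only [Set.mem_setOf_eq] at hj ⊢
      rw [hj] at this; exact Bool.eq_true_of_true_le this
    · intro heq
      have : i ∈ {i : Fin n | y i = true} := heq ▸ (by simp [hx.1])
      simp [hx.2] at this
  · rintro ⟨hsub, hne⟩
    have hle : ∀ i : Fin n, y i ≤ x i := by
      intro i
      cases hy : y i
      · simp
      · have := hsub (show i ∈ _ from hy)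
        simp only [Set.mem_setOf_eq] at this
        simp [this]
    have hex : ∃ i : Fin n, (x i && !y i) = true := by
      by_contra h
      push_neg at h
      apply hne
      ext j
      simp only [Set.mem_setOf_eq]
      constructor
      · intro hj; exact hsub hj
      · intro hj
        have := h j
        simp [hj] at this
        exact this
    refine ⟨hle, fun k => decide (∃ i : Fin n, i.val < k.val ∧ (x i && !y i) = true), ?_, ?_, ?_⟩
    · simp
    · obtain ⟨i, hi⟩ := hex
      simp only [decide_eq_true_iff]
      exact ⟨i, by simp [Fin.last], hi⟩
    · intro j
      simp only [decide_eq_true_iff]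
      rw [Bool.eq_iff_iff]
      simp only [Bool.or_eq_true, decide_eq_true_iff]
      constructor
      · rintro ⟨i, hi, hx⟩
        simp only [Fin.val_succ] at hi
        rcases lt_or_eq_of_le (Nat.lt_succ_iff.mp hi) with h | h
        · exact Or.inl ⟨i, by simp only [Fin.coe_castSucc]; omega, hx⟩
        · right; exact (Fin.ext h : i = j) ▸ hx
      · rintro (⟨i, hi, hx⟩ | hx)
        · refine ⟨i, ?_, hx⟩
          simp only [Fin.coe_castSucc] at hi
          simp only [Fin.val_succ]; omega
        · exact ⟨j, by simp [Fin.val_succ], hx⟩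
end

section
/- Grid lower bound for the chain interleaving: the graph obtained from the n × n grid graph by taking the union of n horizontal paths (rows) connected end-to-end into one chain and n vertical paths (columns) connected end-to-end into another chain contains the n × n grid as a subgraph, and hence has treewidth at least n. -/
/-- A tree decomposition of a graph `G` with bag-index (node) type `T`. -/
structure TreeDecomp {V : Type} (G : SimpleGraph V) (T : Type) where
  tree : SimpleGraph T
  isTree : tree.IsTree
  bag : T → Set V
  vertexCover : ∀ v : V, ∃ t : T, v ∈ bag t
  edgeCover : ∀ ⦃u v : V⦄, G.Adj u v → ∃ t : T, u ∈ bag t ∧ v ∈ bag t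
  pathCond : ∀ (r s t : T) (p : tree.Walk r t), p.IsPath → s ∈ p.support →
      bag r ∩ bag t ⊆ bag s

/-- `G` admits a tree decomposition of width at most `w`. -/
def hasTDWidthLE {V : Type} (G : SimpleGraph V) (w : ℕ) : Prop :=
  ∃ (T : Type) (td : TreeDecomp G T), ∀ t : T, (td.bag t).encard ≤ w + 1

/-- Horizontal edges of the grid on `Fin n × Fin n` (rows). -/
def horizE (n : ℕ) : Set (Sym2 (Fin n × Fin n)) :=
  {e | ∃ i j k : Fin n, (k : ℕ) = (j : ℕ) + 1 ∧ e = s((i, j), (i, k))}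

/-- Vertical edges of the grid (columns). -/
def vertE (n : ℕ) : Set (Sym2 (Fin n × Fin n)) :=
  {e | ∃ i j k : Fin n, (k : ℕ) = (j : ℕ) + 1 ∧ e = s((j, i), (k, i))}

/-- The n × n grid graph. -/
def gridGraph (n : ℕ) : SimpleGraph (Fin n × Fin n) :=
  SimpleGraph.fromEdgeSet (horizE n ∪ vertE n)

/-- Connector edges of the "black" chain: the right end of row i is joined to
the right end of row i+1 when i is even, and the left ends are joined when i
is odd, so that the rows form one single chain. -/
def rowConnE (n : ℕ) : Set (Sym2 (Fin (n + 1) × Fin (n + 1))) :=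
  {e | ∃ i i' : Fin (n + 1), (i' : ℕ) = (i : ℕ) + 1 ∧
        (((i : ℕ) % 2 = 0 ∧ e = s((i, Fin.last n), (i', Fin.last n))) ∨
         ((i : ℕ) % 2 = 1 ∧ e = s((i, 0), (i', 0))))}

/-- Connector edges of the "pink" chain, linking the columns into one chain. -/
def colConnE (n : ℕ) : Set (Sym2 (Fin (n + 1) × Fin (n + 1))) :=
  {e | ∃ i i' : Fin (n + 1), (i' : ℕ) = (i : ℕ) + 1 ∧
        (((i : ℕ) % 2 = 0 ∧ e = s((Fin.last n, i), (Fin.last n, i'))) ∨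
         ((i : ℕ) % 2 = 1 ∧ e = s((0, i), (0, i'))))}

/-- The union of the horizontal chain and the vertical chain. -/
def chainUnion (n : ℕ) : SimpleGraph (Fin (n + 1) × Fin (n + 1)) :=
  SimpleGraph.fromEdgeSet (horizE (n + 1) ∪ rowConnE n ∪ vertE (n + 1) ∪ colConnE n)

/-- the union of the two interleaved chains contains the grid as
a subgraph, hence (using the classical fact that the (n+1) × (n+1) grid has
treewidth n+1, taken as hypothesis) it has treewidth at least n+1. -/
theorem chainUnion_contains_grid_and_treewidth
    (n : ℕ)
    (hgrid : ∀ w : ℕ, hasTDWidthLE (gridGraph (n + 1)) w → n + 1 ≤ w) :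
    gridGraph (n + 1) ≤ chainUnion n ∧
    (∀ w : ℕ, hasTDWidthLE (chainUnion n) w → n + 1 ≤ w) := by
  have hle : gridGraph (n + 1) ≤ chainUnion n := by
    apply SimpleGraph.fromEdgeSet_mono
    intro e he
    rcases he with h | h
    · exact Or.inl (Or.inl (Or.inl h))
    · exact Or.inl (Or.inr h)
  refine ⟨hle, fun w hw => hgrid w ?_⟩
  obtain ⟨T, td, hb⟩ := hw
  exact ⟨T, ⟨td.tree, td.isTree, td.bag, td.vertexCover,
    fun u v h => td.edgeCover (hle h), td.pathCond⟩, hb⟩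
end
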